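/- For any finite vocabulary τ, any τ-structures 𝔄, 𝔅 with a nonempty set X ⊆ dom(𝔄) and b ∈ dom(𝔅), and any natural number ℓ: 𝔄,X ≤^ℓ_hornALC 𝔅,b if and only if there exists a nonempty X₀ ⊆ X with 𝔄,X₀ ⪯^ℓ_horn 𝔅,b. Moreover, if 𝔄 and 𝔅 are finite, then 𝔄,X ≤_hornALC 𝔅,b if and only if there exists a nonempty X₀ ⊆ X with 𝔄,X₀ ⪯_horn 𝔅,b. -/

import Mathlib

/-- A τ-structure over domain `D`, for a vocabulary with concept names `Con`
(unary predicates) and role names `Rol` (binary predicates). -/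
structure Str (Con Rol : Type) (D : Type) where
  conI : Con → Set D
  rolI : Rol → Set (D × D)

/-- ALC-concepts over the vocabulary `(Con, Rol)`. -/
inductive ALC (Con Rol : Type) where
  | top : ALC Con Rol
  | bot : ALC Con Rol
  | atomic : Con → ALC Con Rol
  | neg : ALC Con Rol → ALC Con Rol
  | disj : ALC Con Rol → ALC Con Rol → ALC Con Rol
  | conj : ALC Con Rol → ALC Con Rol → ALC Con Rol
  | impl : ALC Con Rol → ALC Con Rol → ALC Con Rol
  | ex : Rol → ALC Con Rol → ALC Con Rol
  | all : Rol → ALC Con Rol → ALC Con Rol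

variable {Con Rol D D1 D2 : Type}

/-- The extension `C^𝔄` of an ALC-concept in a structure. -/
def ALC.sem (M : Str Con Rol D) : ALC Con Rol → Set D
  | .top => Set.univ
  | .bot => ∅
  | .atomic A => M.conI A
  | .neg C => (C.sem M)ᶜ
  | .disj C C' => C.sem M ∪ C'.sem M
  | .conj C C' => C.sem M ∩ C'.sem M
  | .impl C C' => (C.sem M)ᶜ ∪ C'.sem M
  | .ex R C => {a | ∃ b, (a, b) ∈ M.rolI R ∧ b ∈ C.sem M}
  | .all R C => {a | ∀ b, (a, b) ∈ M.rolI R → b ∈ C.sem M}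

/-- The depth of an ALC-concept: maximal nesting of `∃R` and `∀R`. -/
def ALC.depth : ALC Con Rol → ℕ
  | .top | .bot | .atomic _ => 0
  | .neg C => C.depth
  | .disj C C' | .conj C C' | .impl C C' => max C.depth C'.depth
  | .ex _ C | .all _ C => C.depth + 1

/-- ELU-concepts: built from concept names and ⊤ using ⊓, ⊔ and ∃R only. -/
inductive ALC.IsELU : ALC Con Rol → Prop
  | top : IsELU .top
  | atomic (A : Con) : IsELU (.atomic A)
  | conj {C C' : ALC Con Rol} : IsELU C → IsELU C' → IsELU (.conj C C')
  | disj {C C' : ALC Con Rol} : IsELU C → IsELU C' → IsELU (.disj C C')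
  | ex (R : Rol) {C : ALC Con Rol} : IsELU C → IsELU (.ex R C)

/-- hornALC-concepts: `H ::= ⊥ | ⊤ | A | H⊓H' | L→H | ∃R.H | ∀R.H` with `L` an ELU-concept. -/
inductive ALC.IsHorn : ALC Con Rol → Prop
  | bot : IsHorn .bot
  | top : IsHorn .top
  | atomic (A : Con) : IsHorn (.atomic A)
  | conj {H H' : ALC Con Rol} : IsHorn H → IsHorn H' → IsHorn (.conj H H')
  | impl {L H : ALC Con Rol} : IsELU L → IsHorn H → IsHorn (.impl L H)
  | ex (R : Rol) {H : ALC Con Rol} : IsHorn H → IsHorn (.ex R H)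
  | all (R : Rol) {H : ALC Con Rol} : IsHorn H → IsHorn (.all R H)

/-- `S` is a simulation between `M` and `N`. -/
def IsSim (M : Str Con Rol D1) (N : Str Con Rol D2) (S : Set (D1 × D2)) : Prop :=
  ∀ a b, (a, b) ∈ S →
    (∀ A, a ∈ M.conI A → b ∈ N.conI A) ∧
    (∀ R a', (a, a') ∈ M.rolI R → ∃ b', (b, b') ∈ N.rolI R ∧ (a', b') ∈ S)

/-- `𝔄,a ⪯_sim 𝔅,b`: some simulation contains `(a,b)`. -/
def Sim (M : Str Con Rol D1) (N : Str Con Rol D2) (a : D1) (b : D2) : Prop :=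
  ∃ S, IsSim M N S ∧ (a, b) ∈ S

/-- The ℓ-round simulation relations `⪯^ℓ_sim`. -/
def SimL (M : Str Con Rol D1) (N : Str Con Rol D2) : ℕ → D1 → D2 → Prop
  | 0 => fun a b => ∀ A, a ∈ M.conI A → b ∈ N.conI A
  | ℓ + 1 => fun a b =>
      (∀ A, a ∈ M.conI A → b ∈ N.conI A) ∧
      ∀ R a', (a, a') ∈ M.rolI R → ∃ b', (b, b') ∈ N.rolI R ∧ SimL M N ℓ a' b'

/-- `X R↑ Y`. -/
def relUp (R : Set (D1 × D1)) (X Y : Set D1) : Prop := ∀ a ∈ X, ∃ b ∈ Y, (a, b) ∈ R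

/-- `X R↓ Y`. -/
def relDown (R : Set (D1 × D1)) (X Y : Set D1) : Prop := ∀ b ∈ Y, ∃ a ∈ X, (a, b) ∈ R

/-- `Z` is a Horn simulation between `M` and `N`. -/
def IsHornSim (M : Str Con Rol D1) (N : Str Con Rol D2) (Z : Set (Set D1 × D2)) : Prop :=
  ∀ X b, (X, b) ∈ Z →
    X.Nonempty ∧
    (∀ A, X ⊆ M.conI A → b ∈ N.conI A) ∧
    (∀ R Y, relUp (M.rolI R) X Y →
        ∃ Y', Y' ⊆ Y ∧ ∃ b', (b, b') ∈ N.rolI R ∧ (Y', b') ∈ Z) ∧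
    (∀ R b', (b, b') ∈ N.rolI R → ∃ Y, relDown (M.rolI R) X Y ∧ (Y, b') ∈ Z) ∧
    (∀ a ∈ X, Sim N M b a)

/-- `𝔄,X ⪯_horn 𝔅,b`: some Horn simulation contains `(X,b)`. -/
def HornSim (M : Str Con Rol D1) (N : Str Con Rol D2) (X : Set D1) (b : D2) : Prop :=
  ∃ Z, IsHornSim M N Z ∧ (X, b) ∈ Z

/-- The ℓ-round Horn simulation relations `⪯^ℓ_horn`. -/
def HornSimL (M : Str Con Rol D1) (N : Str Con Rol D2) : ℕ → Set D1 → D2 → Prop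
  | 0 => fun X b =>
      X.Nonempty ∧ (∀ A, X ⊆ M.conI A → b ∈ N.conI A) ∧ ∀ a ∈ X, SimL N M 0 b a
  | ℓ + 1 => fun X b =>
      (X.Nonempty ∧ (∀ A, X ⊆ M.conI A → b ∈ N.conI A) ∧ ∀ a ∈ X, SimL N M 0 b a) ∧
      (∀ R Y, relUp (M.rolI R) X Y →
          ∃ Y', Y' ⊆ Y ∧ ∃ b', (b, b') ∈ N.rolI R ∧ HornSimL M N ℓ Y' b') ∧
      (∀ R b', (b, b') ∈ N.rolI R → ∃ Y, relDown (M.rolI R) X Y ∧ HornSimL M N ℓ Y b') ∧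
      (∀ a ∈ X, SimL N M (ℓ + 1) b a)

/-- `𝔄,X ≤^ℓ_hornALC 𝔅,b`. -/
def leHornDepth (M : Str Con Rol D1) (N : Str Con Rol D2) (ℓ : ℕ) (X : Set D1) (b : D2) : Prop :=
  ∀ C : ALC Con Rol, C.IsHorn → C.depth ≤ ℓ → X ⊆ C.sem M → b ∈ C.sem N

/-- `𝔄,X ≤_hornALC 𝔅,b`. -/
def leHorn (M : Str Con Rol D1) (N : Str Con Rol D2) (X : Set D1) (b : D2) : Prop :=
  ∀ C : ALC Con Rol, C.IsHorn → X ⊆ C.sem M → b ∈ C.sem N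

/-- `𝔄,a ≤^ℓ_ELU 𝔅,b`. -/
def leELUDepth (M : Str Con Rol D1) (N : Str Con Rol D2) (ℓ : ℕ) (a : D1) (b : D2) : Prop :=
  ∀ C : ALC Con Rol, C.IsELU → C.depth ≤ ℓ → a ∈ C.sem M → b ∈ C.sem N

/-- `𝔄,a ≤_ELU 𝔅,b`. -/
def leELU (M : Str Con Rol D1) (N : Str Con Rol D2) (a : D1) (b : D2) : Prop :=
  ∀ C : ALC Con Rol, C.IsELU → a ∈ C.sem M → b ∈ C.sem N

/-! ### Auxiliary development -/

attribute [local instance] Classical.propDecidable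

namespace HornAux

open ALC

variable {Con Rol D D1 D2 : Type}

/-- Finite conjunction of a list of concepts. -/
def bigConj : List (ALC Con Rol) → ALC Con Rol
  | [] => .top
  | C :: l => .conj C (bigConj l)

lemma mem_bigConj {M : Str Con Rol D} :
    ∀ (l : List (ALC Con Rol)) (x : D), x ∈ (bigConj l).sem M ↔ ∀ C ∈ l, x ∈ C.sem M
  | [], x => by simp [bigConj, ALC.sem]
  | C :: l, x => by
      simp only [bigConj, ALC.sem, Set.mem_inter_iff, mem_bigConj l x, List.mem_cons]
      constructor
      · rintro ⟨h1, h2⟩ C' (rfl | h) <;> [exact h1; exact h2 _ h]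
      · intro h; exact ⟨h _ (Or.inl rfl), fun C' hC' => h _ (Or.inr hC')⟩

lemma bigConj_isHorn : ∀ {l : List (ALC Con Rol)}, (∀ C ∈ l, C.IsHorn) → (bigConj l).IsHorn
  | [], _ => IsHorn.top
  | C :: l, h => IsHorn.conj (h _ List.mem_cons_self)
      (bigConj_isHorn fun C' hC' => h _ (List.mem_cons_of_mem _ hC'))

lemma bigConj_isELU : ∀ {l : List (ALC Con Rol)}, (∀ C ∈ l, C.IsELU) → (bigConj l).IsELU
  | [], _ => IsELU.top
  | C :: l, h => IsELU.conj (h _ List.mem_cons_self)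
      (bigConj_isELU fun C' hC' => h _ (List.mem_cons_of_mem _ hC'))

lemma bigConj_depth {k : ℕ} :
    ∀ {l : List (ALC Con Rol)}, (∀ C ∈ l, C.depth ≤ k) → (bigConj l).depth ≤ k
  | [], _ => by simp [bigConj, ALC.depth]
  | C :: l, h => by
      have h1 := h _ List.mem_cons_self
      have h2 := bigConj_depth fun C' hC' => h _ (List.mem_cons_of_mem _ hC')
      simpa [bigConj, ALC.depth] using ⟨h1, h2⟩

/-! ### Basic lemmas about `SimL` and `HornSimL` -/

variable {M : Str Con Rol D1} {N : Str Con Rol D2}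

lemma simL_atom {A : Con} : ∀ (ℓ : ℕ) {a b}, SimL M N ℓ a b → a ∈ M.conI A → b ∈ N.conI A
  | 0, _, _, h => h A
  | _ + 1, _, _, h => h.1 A

lemma simL_of_succ : ∀ (ℓ : ℕ) {a b}, SimL M N (ℓ + 1) a b → SimL M N ℓ a b
  | 0, _, _, h => h.1
  | ℓ + 1, a, b, h =>
      ⟨h.1, fun R a' ha' => by
        obtain ⟨b', hb', hs⟩ := h.2 R a' ha'
        exact ⟨b', hb', simL_of_succ ℓ hs⟩⟩

lemma simL_mono {ℓ m : ℕ} (hlm : ℓ ≤ m) {a b} (h : SimL M N m a b) : SimL M N ℓ a b := by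
  induction hlm with
  | refl => exact h
  | @step m _ ih => exact ih (simL_of_succ m h)

lemma hornSimL_nonempty : ∀ (ℓ : ℕ) {X b}, HornSimL M N ℓ X b → X.Nonempty
  | 0, _, _, h => h.1
  | _ + 1, _, _, h => h.1.1

lemma hornSimL_atom {A : Con} : ∀ (ℓ : ℕ) {X b}, HornSimL M N ℓ X b → X ⊆ M.conI A → b ∈ N.conI A
  | 0, _, _, h => h.2.1 A
  | _ + 1, _, _, h => h.1.2.1 A

lemma hornSimL_simL : ∀ (ℓ : ℕ) {X b}, HornSimL M N ℓ X b → ∀ a ∈ X, SimL N M ℓ b a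
  | 0, _, _, h => h.2.2
  | _ + 1, _, _, h => h.2.2.2

lemma hornSimL_of_succ : ∀ (ℓ : ℕ) {X b}, HornSimL M N (ℓ + 1) X b → HornSimL M N ℓ X b
  | 0, _, _, h => h.1
  | ℓ + 1, X, b, h => by
      refine ⟨h.1, fun R Y hup => ?_, fun R b' hb' => ?_, fun a ha => simL_of_succ _ (h.2.2.2 a ha)⟩
      · obtain ⟨Y', hY', b', hb', hs⟩ := h.2.1 R Y hup
        exact ⟨Y', hY', b', hb', hornSimL_of_succ ℓ hs⟩
      · obtain ⟨Y, hY, hs⟩ := h.2.2.1 R b' hb'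
        exact ⟨Y, hY, hornSimL_of_succ ℓ hs⟩

lemma hornSimL_mono {ℓ m : ℕ} (hlm : ℓ ≤ m) {X b} (h : HornSimL M N m X b) :
    HornSimL M N ℓ X b := by
  induction hlm with
  | refl => exact h
  | @step m _ ih => exact ih (hornSimL_of_succ m h)

/-! ### Preservation lemmas -/

lemma elu_simL {C : ALC Con Rol} (hC : C.IsELU) :
    ∀ (ℓ : ℕ), C.depth ≤ ℓ → ∀ {b a}, SimL N M ℓ b a → b ∈ C.sem N → a ∈ C.sem M := by
  induction hC with
  | top => intro ℓ _ b a _ _; trivial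
  | atomic A => intro ℓ _ b a hs hb; exact simL_atom ℓ hs hb
  | @conj C C' _ _ ih ih' =>
      intro ℓ hd b a hs hb
      have hd' : C.depth ≤ ℓ ∧ C'.depth ≤ ℓ := by
        simpa [ALC.depth] using hd
      exact ⟨ih ℓ hd'.1 hs hb.1, ih' ℓ hd'.2 hs hb.2⟩
  | @disj C C' _ _ ih ih' =>
      intro ℓ hd b a hs hb
      have hd' : C.depth ≤ ℓ ∧ C'.depth ≤ ℓ := by
        simpa [ALC.depth] using hd
      rcases hb with hb | hb
      · exact Or.inl (ih ℓ hd'.1 hs hb)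
      · exact Or.inr (ih' ℓ hd'.2 hs hb)
  | @ex R C _ ih =>
      intro ℓ hd b a hs hb
      rcases ℓ with _ | m
      · exact absurd hd (by simp [ALC.depth])
      · obtain ⟨b', hb', hbC⟩ := hb
        obtain ⟨a', ha', hs'⟩ := hs.2 R b' hb'
        have hdm : C.depth ≤ m := by simpa [ALC.depth] using hd
        exact ⟨a', ha', ih m hdm hs' hbC⟩

lemma elu_sim {C : ALC Con Rol} (hC : C.IsELU) {S : Set (D2 × D1)} (hS : IsSim N M S) :
    ∀ {b a}, (b, a) ∈ S → b ∈ C.sem N → a ∈ C.sem M := by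
  induction hC with
  | top => intro b a _ _; trivial
  | atomic A => intro b a hba hb; exact (hS b a hba).1 A hb
  | conj _ _ ih ih' => intro b a hba hb; exact ⟨ih hba hb.1, ih' hba hb.2⟩
  | disj _ _ ih ih' =>
      intro b a hba hb
      rcases hb with hb | hb
      · exact Or.inl (ih hba hb)
      · exact Or.inr (ih' hba hb)
  | @ex R C _ ih =>
      intro b a hba hb
      obtain ⟨b', hb', hbC⟩ := hb
      obtain ⟨a', ha', hmem⟩ := (hS b a hba).2 R b' hb'
      exact ⟨a', ha', ih hmem hbC⟩

lemma horn_hornSimL {C : ALC Con Rol} (hC : C.IsHorn) :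
    ∀ (ℓ : ℕ), C.depth ≤ ℓ → ∀ {X b}, HornSimL M N ℓ X b → X ⊆ C.sem M → b ∈ C.sem N := by
  induction hC with
  | bot =>
      intro ℓ _ X b hs hsub
      obtain ⟨a, ha⟩ := hornSimL_nonempty ℓ hs
      exact absurd (hsub ha) (by simp [ALC.sem])
  | top => intro ℓ _ X b _ _; trivial
  | atomic A => intro ℓ _ X b hs hsub; exact hornSimL_atom ℓ hs hsub
  | @conj H H' _ _ ih ih' =>
      intro ℓ hd X b hs hsub
      have hd' : H.depth ≤ ℓ ∧ H'.depth ≤ ℓ := by simpa [ALC.depth] using hd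
      exact ⟨ih ℓ hd'.1 hs fun a ha => (hsub ha).1, ih' ℓ hd'.2 hs fun a ha => (hsub ha).2⟩
  | @impl L H hL _ ih =>
      intro ℓ hd X b hs hsub
      have hd' : L.depth ≤ ℓ ∧ H.depth ≤ ℓ := by simpa [ALC.depth] using hd
      by_cases hb : b ∈ L.sem N
      · refine Or.inr (ih ℓ hd'.2 hs fun a ha => ?_)
        have haL : a ∈ L.sem M := elu_simL hL ℓ hd'.1 (hornSimL_simL ℓ hs a ha) hb
        rcases hsub ha with h | h
        · exact absurd haL h
        · exact h
      · exact Or.inl hb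
  | @ex R H _ ih =>
      intro ℓ hd X b hs hsub
      rcases ℓ with _ | m
      · exact absurd hd (by simp [ALC.depth])
      · have hdm : H.depth ≤ m := by simpa [ALC.depth] using hd
        have hup : relUp (M.rolI R) X (H.sem M) := fun a ha => by
          obtain ⟨a', ha', haH⟩ := hsub ha
          exact ⟨a', haH, ha'⟩
        obtain ⟨Y', hY', b', hb', hs'⟩ := hs.2.1 R (H.sem M) hup
        exact ⟨b', hb', ih m hdm hs' hY'⟩
  | @all R H _ ih =>
      intro ℓ hd X b hs hsub
      rcases ℓ with _ | m
      · exact absurd hd (by simp [ALC.depth])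
      · have hdm : H.depth ≤ m := by simpa [ALC.depth] using hd
        intro b' hb'
        obtain ⟨Y, hY, hs'⟩ := hs.2.2.1 R b' hb'
        refine ih m hdm hs' fun a' ha' => ?_
        obtain ⟨a, ha, haa'⟩ := hY a' ha'
        exact hsub ha a' haa'

lemma horn_hornSim {C : ALC Con Rol} (hC : C.IsHorn) {Z : Set (Set D1 × D2)}
    (hZ : IsHornSim M N Z) :
    ∀ {X b}, (X, b) ∈ Z → X ⊆ C.sem M → b ∈ C.sem N := by
  induction hC with
  | bot =>
      intro X b hm hsub
      obtain ⟨a, ha⟩ := (hZ X b hm).1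
      exact absurd (hsub ha) (by simp [ALC.sem])
  | top => intro X b _ _; trivial
  | atomic A => intro X b hm hsub; exact (hZ X b hm).2.1 A hsub
  | conj _ _ ih ih' =>
      intro X b hm hsub
      exact ⟨ih hm fun a ha => (hsub ha).1, ih' hm fun a ha => (hsub ha).2⟩
  | @impl L H hL _ ih =>
      intro X b hm hsub
      by_cases hb : b ∈ L.sem N
      · refine Or.inr (ih hm fun a ha => ?_)
        obtain ⟨S, hS, hmem⟩ := (hZ _ _ hm).2.2.2.2 a ha
        have haL : a ∈ L.sem M := elu_sim hL hS hmem hb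
        rcases hsub ha with h | h
        · exact absurd haL h
        · exact h
      · exact Or.inl hb
  | @ex R H _ ih =>
      intro X b hm hsub
      have hup : relUp (M.rolI R) X (H.sem M) := fun a ha => by
        obtain ⟨a', ha', haH⟩ := hsub ha
        exact ⟨a', haH, ha'⟩
      obtain ⟨Y', hY', b', hb', hm'⟩ := (hZ _ _ hm).2.2.1 R (H.sem M) hup
      exact ⟨b', hb', ih hm' hY'⟩
  | @all R H _ ih =>
      intro X b hm hsub
      intro b' hb'
      obtain ⟨Y, hY, hm'⟩ := (hZ _ _ hm).2.2.2.1 R b' hb'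
      refine ih hm' fun a' ha' => ?_
      obtain ⟨a, ha, haa'⟩ := hY a' ha'
      exact hsub ha a' haa'

/-! ### Depth-`ℓ` simulation types and characteristic EL-concepts -/

/-- The (abstract) depth-`ℓ` simulation types over the vocabulary. -/
def Tp (Con Rol : Type) : ℕ → Type
  | 0 => Con → Prop
  | ℓ + 1 => (Con → Prop) × (Rol → Set (Tp Con Rol ℓ))

instance tpFinite [Finite Con] [Finite Rol] : ∀ ℓ, Finite (Tp Con Rol ℓ)
  | 0 => inferInstanceAs (Finite (Con → Prop))
  | ℓ + 1 =>
      have : Finite (Tp Con Rol ℓ) := tpFinite ℓ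
      have : Finite (Set (Tp Con Rol ℓ)) := inferInstanceAs (Finite (Tp Con Rol ℓ → Prop))
      inferInstanceAs (Finite ((Con → Prop) × (Rol → Set (Tp Con Rol ℓ))))

/-- The depth-`ℓ` simulation type of an element. -/
def tp (N : Str Con Rol D) : (ℓ : ℕ) → D → Tp Con Rol ℓ
  | 0, b => fun A => b ∈ N.conI A
  | ℓ + 1, b =>
      ⟨fun A => b ∈ N.conI A, fun R => {t | ∃ b', (b, b') ∈ N.rolI R ∧ t = tp N ℓ b'}⟩

/-- Conjunction of the atoms in a type. -/
noncomputable def atomsConj [Fintype Con] (t : Con → Prop) : ALC Con Rol :=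
  HornAux.bigConj (((Finset.univ : Finset Con).filter t).toList.map ALC.atomic)

lemma mem_atomsConj_sem [Fintype Con] {M : Str Con Rol D} {t : Con → Prop} {x : D} :
    x ∈ (atomsConj (Rol := Rol) t).sem M ↔ ∀ A, t A → x ∈ M.conI A := by
  rw [atomsConj, HornAux.mem_bigConj]
  constructor
  · intro h A hA
    exact h (ALC.atomic A)
      (List.mem_map.2 ⟨A, Finset.mem_toList.2 (Finset.mem_filter.2 ⟨Finset.mem_univ _, hA⟩), rfl⟩)
  · rintro h C hC
    obtain ⟨A, hA, rfl⟩ := List.mem_map.1 hC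
    exact h A (Finset.mem_filter.1 (Finset.mem_toList.1 hA)).2

lemma atomsConj_isELU [Fintype Con] {t : Con → Prop} : (atomsConj (Rol := Rol) t).IsELU := by
  refine HornAux.bigConj_isELU fun C hC => ?_
  obtain ⟨A, _, rfl⟩ := List.mem_map.1 hC
  exact ALC.IsELU.atomic A

lemma atomsConj_depth [Fintype Con] {t : Con → Prop} {k : ℕ} :
    (atomsConj (Rol := Rol) t).depth ≤ k := by
  refine HornAux.bigConj_depth fun C hC => ?_
  obtain ⟨A, _, rfl⟩ := List.mem_map.1 hC
  simp [ALC.depth]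

/-- The characteristic EL-concept of a depth-`ℓ` type. -/
noncomputable def tpc [Fintype Con] [Fintype Rol] : (ℓ : ℕ) → Tp Con Rol ℓ → ALC Con Rol
  | 0, t => atomsConj t
  | ℓ + 1, t =>
      ALC.conj (atomsConj t.1)
        (HornAux.bigConj ((Finset.univ : Finset Rol).toList.map fun R =>
          HornAux.bigConj (((t.2 R).toFinite.toFinset.toList).map fun s =>
            ALC.ex R (tpc ℓ s))))

lemma tpc_isELU [Fintype Con] [Fintype Rol] :
    ∀ (ℓ : ℕ) (t : Tp Con Rol ℓ), (tpc ℓ t).IsELU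
  | 0, t => atomsConj_isELU
  | ℓ + 1, t => by
      refine ALC.IsELU.conj atomsConj_isELU (HornAux.bigConj_isELU fun C hC => ?_)
      obtain ⟨R, _, rfl⟩ := List.mem_map.1 hC
      refine HornAux.bigConj_isELU fun C' hC' => ?_
      obtain ⟨s, _, rfl⟩ := List.mem_map.1 hC'
      exact ALC.IsELU.ex R (tpc_isELU ℓ s)

lemma tpc_depth [Fintype Con] [Fintype Rol] :
    ∀ (ℓ : ℕ) (t : Tp Con Rol ℓ), (tpc ℓ t).depth ≤ ℓ
  | 0, t => atomsConj_depth
  | ℓ + 1, t => by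
      have h2 : (HornAux.bigConj ((Finset.univ : Finset Rol).toList.map fun R =>
          HornAux.bigConj (((t.2 R).toFinite.toFinset.toList).map fun s =>
            ALC.ex R (tpc ℓ s)))).depth ≤ ℓ + 1 := by
        refine HornAux.bigConj_depth fun C hC => ?_
        obtain ⟨R, _, rfl⟩ := List.mem_map.1 hC
        refine HornAux.bigConj_depth fun C' hC' => ?_
        obtain ⟨s, _, rfl⟩ := List.mem_map.1 hC'
        have := tpc_depth ℓ s
        simp only [ALC.depth]
        omega
      have h1 : (atomsConj (Rol := Rol) t.1).depth ≤ ℓ + 1 := atomsConj_depth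
      simpa [tpc, ALC.depth] using ⟨h1, h2⟩

lemma tpc_self [Fintype Con] [Fintype Rol] {D : Type} :
    ∀ (ℓ : ℕ) (N : Str Con Rol D) (b : D), b ∈ (tpc ℓ (tp N ℓ b)).sem N
  | 0, N, b => mem_atomsConj_sem.2 fun A hA => hA
  | ℓ + 1, N, b => by
      refine ⟨mem_atomsConj_sem.2 fun A hA => hA, ?_⟩
      rw [HornAux.mem_bigConj]
      intro C hC
      obtain ⟨R, _, rfl⟩ := List.mem_map.1 hC
      rw [HornAux.mem_bigConj]
      intro C' hC'
      obtain ⟨s, hs, rfl⟩ := List.mem_map.1 hC'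
      obtain ⟨b', hb', rfl⟩ := (Set.Finite.mem_toFinset _).1 (Finset.mem_toList.1 hs)
      exact ⟨b', hb', tpc_self ℓ N b'⟩

lemma tpc_sim [Fintype Con] [Fintype Rol] {DA DB : Type} :
    ∀ (ℓ : ℕ) (N : Str Con Rol DB) (M : Str Con Rol DA) (b : DB) (a : DA),
      a ∈ (tpc ℓ (tp N ℓ b)).sem M → SimL N M ℓ b a
  | 0, N, M, b, a => fun h A hA => mem_atomsConj_sem.1 h A hA
  | ℓ + 1, N, M, b, a => by
      intro h
      refine ⟨fun A hA => mem_atomsConj_sem.1 h.1 A hA, fun R b' hb' => ?_⟩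
      have hC := (HornAux.mem_bigConj _ _).1 h.2
        (HornAux.bigConj ((((tp N (ℓ+1) b).2 R).toFinite.toFinset.toList).map fun s =>
          ALC.ex R (tpc ℓ s)))
        (List.mem_map.2 ⟨R, Finset.mem_toList.2 (Finset.mem_univ R), rfl⟩)
      have hmem : (tp N ℓ b') ∈ ((tp N (ℓ+1) b).2 R).toFinite.toFinset :=
        (Set.Finite.mem_toFinset _).2 ⟨b', hb', rfl⟩
      have hx := (HornAux.mem_bigConj _ _).1 hC (ALC.ex R (tpc ℓ (tp N ℓ b')))
        (List.mem_map.2 ⟨tp N ℓ b', Finset.mem_toList.2 hmem, rfl⟩)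
      obtain ⟨a', ha', hsem⟩ := hx
      exact ⟨a', ha', tpc_sim ℓ N M b' a' hsem⟩

/-! ### The canonical finite family of Horn concepts -/

/-- Implications from characteristic concepts into a given family (or `⊥`). -/
def GGs [Fintype Con] [Fintype Rol] (ℓ : ℕ) (S : Set (ALC Con Rol)) : Set (ALC Con Rol) :=
  (fun p : Tp Con Rol ℓ × ALC Con Rol => ALC.impl (tpc ℓ p.1) p.2) ''
    (Set.univ ×ˢ insert ALC.bot S)

lemma GGs_finite [Fintype Con] [Fintype Rol] {ℓ : ℕ} {S : Set (ALC Con Rol)} (hS : S.Finite) :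
    (GGs ℓ S).Finite :=
  Set.Finite.image _ ((Set.finite_univ).prod (hS.insert _))

lemma mem_GGs [Fintype Con] [Fintype Rol] {ℓ : ℕ} {S : Set (ALC Con Rol)}
    (t : Tp Con Rol ℓ) {H : ALC Con Rol} (hH : H ∈ insert ALC.bot S) :
    ALC.impl (tpc ℓ t) H ∈ GGs ℓ S :=
  ⟨(t, H), ⟨Set.mem_univ _, hH⟩, rfl⟩

/-- The canonical finite family of depth-`≤ ℓ` Horn concepts. -/
def CC (Con Rol : Type) [Fintype Con] [Fintype Rol] : ℕ → Set (ALC Con Rol)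
  | 0 => insert ALC.bot (Set.range ALC.atomic)
  | ℓ + 1 =>
      insert ALC.bot (Set.range ALC.atomic)
      ∪ (fun p : Rol × Finset (ALC Con Rol) => ALC.ex p.1 (HornAux.bigConj p.2.toList)) ''
          (Set.univ ×ˢ {Γ : Finset (ALC Con Rol) | ↑Γ ⊆ GGs ℓ (CC Con Rol ℓ)})
      ∪ (fun p : Rol × ALC Con Rol => ALC.all p.1 p.2) '' (Set.univ ×ˢ GGs ℓ (CC Con Rol ℓ))

lemma CC_finite (Con Rol : Type) [Fintype Con] [Fintype Rol] :
    ∀ ℓ, (CC Con Rol ℓ).Finite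
  | 0 => (Set.finite_range _).insert _
  | ℓ + 1 => by
      have hG : (GGs ℓ (CC Con Rol ℓ)).Finite := GGs_finite (CC_finite Con Rol ℓ)
      have hΓ : {Γ : Finset (ALC Con Rol) | ↑Γ ⊆ GGs ℓ (CC Con Rol ℓ)}.Finite := by
        have h1 : {T : Set (ALC Con Rol) | T ⊆ GGs ℓ (CC Con Rol ℓ)}.Finite :=
          hG.finite_subsets
        have : {Γ : Finset (ALC Con Rol) | ↑Γ ⊆ GGs ℓ (CC Con Rol ℓ)} =
            (fun Γ : Finset (ALC Con Rol) => (↑Γ : Set (ALC Con Rol))) ⁻¹'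
              {T | T ⊆ GGs ℓ (CC Con Rol ℓ)} := rfl
        rw [this]
        exact Set.Finite.preimage (Finset.coe_injective.injOn) h1
      exact (((Set.finite_range _).insert _).union
          (Set.Finite.image _ (Set.finite_univ.prod hΓ))).union
        (Set.Finite.image _ (Set.finite_univ.prod hG))

lemma GGs_spec [Fintype Con] [Fintype Rol] {ℓ : ℕ} {S : Set (ALC Con Rol)}
    (hS : ∀ C ∈ S, C.IsHorn ∧ C.depth ≤ ℓ) {C : ALC Con Rol} (hC : C ∈ GGs ℓ S) :
    C.IsHorn ∧ C.depth ≤ ℓ := by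
  obtain ⟨⟨t, H⟩, ⟨-, hH⟩, rfl⟩ := hC
  have hHspec : H.IsHorn ∧ H.depth ≤ ℓ := by
    rcases hH with rfl | hH
    · exact ⟨ALC.IsHorn.bot, by simp [ALC.depth]⟩
    · exact hS H hH
  refine ⟨ALC.IsHorn.impl (tpc_isELU ℓ t) hHspec.1, ?_⟩
  have h1 := tpc_depth ℓ t
  have h2 := hHspec.2
  simp only [ALC.depth]
  omega

lemma CC_spec (Con Rol : Type) [Fintype Con] [Fintype Rol] :
    ∀ ℓ, ∀ C ∈ CC Con Rol ℓ, C.IsHorn ∧ C.depth ≤ ℓ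
  | 0, C, hC => by
      rcases hC with rfl | ⟨A, rfl⟩
      · exact ⟨ALC.IsHorn.bot, by simp [ALC.depth]⟩
      · exact ⟨ALC.IsHorn.atomic A, by simp [ALC.depth]⟩
  | ℓ + 1, C, hC => by
      have hGspec : ∀ {G : ALC Con Rol}, G ∈ GGs ℓ (CC Con Rol ℓ) → G.IsHorn ∧ G.depth ≤ ℓ :=
        fun hG => GGs_spec (fun C hC => CC_spec Con Rol ℓ C hC) hG
      rcases hC with (hC | ⟨⟨R, Γ⟩, ⟨-, hΓ⟩, rfl⟩) | ⟨⟨R, G⟩, ⟨-, hG⟩, rfl⟩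
      · rcases hC with rfl | ⟨A, rfl⟩
        · exact ⟨ALC.IsHorn.bot, by simp [ALC.depth]⟩
        · exact ⟨ALC.IsHorn.atomic A, by simp [ALC.depth]⟩
      · have hmem : ∀ G ∈ Γ.toList, G.IsHorn ∧ G.depth ≤ ℓ := fun G hG =>
          hGspec (hΓ (Finset.mem_coe.2 (Finset.mem_toList.1 hG)))
        refine ⟨ALC.IsHorn.ex R (HornAux.bigConj_isHorn fun G hG => (hmem G hG).1), ?_⟩
        have := HornAux.bigConj_depth (l := Γ.toList) fun G hG => (hmem G hG).2
        simp only [ALC.depth]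
        omega
      · obtain ⟨h1, h2⟩ := hGspec hG
        exact ⟨ALC.IsHorn.all R h1, Nat.succ_le_succ h2⟩

/-! ### The key lemma -/

lemma key [Fintype Con] [Fintype Rol] (M : Str Con Rol D1) (N : Str Con Rol D2) :
    ∀ (ℓ : ℕ) (X : Set D1) (b : D2), X.Nonempty → (∀ a ∈ X, SimL N M ℓ b a) →
      ¬ HornSimL M N ℓ X b →
      ∃ C ∈ CC Con Rol ℓ, X ⊆ C.sem M ∧ b ∉ C.sem N := by
  intro ℓ
  induction ℓ with
  | zero =>
      intro X b hne hsims hns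
      have hatom : ¬ ∀ A, X ⊆ M.conI A → b ∈ N.conI A := fun h => hns ⟨hne, h, hsims⟩
      push_neg at hatom
      obtain ⟨A, hXA, hbA⟩ := hatom
      exact ⟨ALC.atomic A, Set.mem_insert_of_mem _ ⟨A, rfl⟩, hXA, hbA⟩
  | succ ℓ IH =>
      intro X b hne hsims hns
      by_cases hatom : ∀ A, X ⊆ M.conI A → b ∈ N.conI A
      · by_cases hforth : ∀ R Y, relUp (M.rolI R) X Y →
            ∃ Y', Y' ⊆ Y ∧ ∃ b', (b, b') ∈ N.rolI R ∧ HornSimL M N ℓ Y' b'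
        · by_cases hback : ∀ R b', (b, b') ∈ N.rolI R →
              ∃ Y, relDown (M.rolI R) X Y ∧ HornSimL M N ℓ Y b'
          · exact absurd
              ⟨⟨hne, hatom, fun a ha => simL_mono (Nat.zero_le _) (hsims a ha)⟩,
                hforth, hback, hsims⟩ hns
          · -- back failure
            push_neg at hback
            obtain ⟨R, b', hb', hfail⟩ := hback
            set Y : Set D1 := {a' | (∃ a ∈ X, (a, a') ∈ M.rolI R) ∧ SimL N M ℓ b' a'} with hYdef
            have hdown : relDown (M.rolI R) X Y := fun a' ha' => ha'.1
            have hHex : ∃ H ∈ insert ALC.bot (CC Con Rol ℓ), Y ⊆ H.sem M ∧ b' ∉ H.sem N := by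
              by_cases hYne : Y.Nonempty
              · obtain ⟨H, hH, h1, h2⟩ :=
                  IH Y b' hYne (fun a' ha' => ha'.2) (hfail Y hdown)
                exact ⟨H, Set.mem_insert_of_mem _ hH, h1, h2⟩
              · refine ⟨ALC.bot, Set.mem_insert _ _, ?_, by simp [ALC.sem]⟩
                rw [Set.not_nonempty_iff_eq_empty] at hYne
                rw [hYne]
                exact Set.empty_subset _
            obtain ⟨H, hH, hYH, hbH⟩ := hHex
            refine ⟨ALC.all R (ALC.impl (tpc ℓ (tp N ℓ b')) H),
              Or.inr ⟨(R, _), ⟨Set.mem_univ _, mem_GGs _ hH⟩, rfl⟩, ?_, ?_⟩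
            · intro a ha a' haa'
              by_cases htp : a' ∈ (tpc ℓ (tp N ℓ b')).sem M
              · exact Or.inr (hYH ⟨⟨a, ha, haa'⟩, tpc_sim ℓ N M b' a' htp⟩)
              · exact Or.inl htp
            · intro hsem
              rcases hsem b' hb' with h | h
              · exact h (tpc_self ℓ N b')
              · exact hbH h
        · -- forth failure
          push_neg at hforth
          obtain ⟨R, Y, hup, hfail⟩ := hforth
          have hHex : ∀ b', (b, b') ∈ N.rolI R →
              ∃ H ∈ insert ALC.bot (CC Con Rol ℓ),
                {a' | a' ∈ Y ∧ SimL N M ℓ b' a'} ⊆ H.sem M ∧ b' ∉ H.sem N := by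
            intro b' hb'
            by_cases hYne : {a' | a' ∈ Y ∧ SimL N M ℓ b' a'}.Nonempty
            · obtain ⟨H, hH, h1, h2⟩ := IH _ b' hYne (fun a' ha' => ha'.2)
                (hfail _ (fun a' ha' => ha'.1) b' hb')
              exact ⟨H, Set.mem_insert_of_mem _ hH, h1, h2⟩
            · refine ⟨ALC.bot, Set.mem_insert _ _, ?_, by simp [ALC.sem]⟩
              rw [Set.not_nonempty_iff_eq_empty] at hYne
              rw [hYne]
              exact Set.empty_subset _
          choose Hf hHmem hHsub hHnb using hHex
          set ΓS : Set (ALC Con Rol) :=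
            {C | ∃ b', ∃ h : (b, b') ∈ N.rolI R,
              C = ALC.impl (tpc ℓ (tp N ℓ b')) (Hf b' h)} with hΓSdef
          have hΓSsub : ΓS ⊆ GGs ℓ (CC Con Rol ℓ) := by
            rintro C ⟨b', h, rfl⟩
            exact mem_GGs _ (hHmem b' h)
          have hfin : ΓS.Finite := (GGs_finite (CC_finite Con Rol ℓ)).subset hΓSsub
          refine ⟨ALC.ex R (HornAux.bigConj hfin.toFinset.toList),
            Or.inl (Or.inr ⟨(R, hfin.toFinset),
              ⟨Set.mem_univ _, by rw [Set.mem_setOf_eq, hfin.coe_toFinset]; exact hΓSsub⟩,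
              rfl⟩), ?_, ?_⟩
          · intro a ha
            obtain ⟨a', ha'Y, haa'⟩ := hup a ha
            refine ⟨a', haa', (HornAux.mem_bigConj _ _).2 fun G hG => ?_⟩
            obtain ⟨b', h, rfl⟩ := hfin.mem_toFinset.1 (Finset.mem_toList.1 hG)
            by_cases htp : a' ∈ (tpc ℓ (tp N ℓ b')).sem M
            · exact Or.inr (hHsub b' h ⟨ha'Y, tpc_sim ℓ N M b' a' htp⟩)
            · exact Or.inl htp
          · rintro ⟨b', hb', hbc⟩
            have hmem : ALC.impl (tpc ℓ (tp N ℓ b')) (Hf b' hb') ∈ hfin.toFinset.toList :=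
              Finset.mem_toList.2 (hfin.mem_toFinset.2 ⟨b', hb', rfl⟩)
            rcases (HornAux.mem_bigConj _ _).1 hbc _ hmem with h | h
            · exact h (tpc_self ℓ N b')
            · exact hHnb b' hb' h
      · -- atom failure
        push_neg at hatom
        obtain ⟨A, hXA, hbA⟩ := hatom
        exact ⟨ALC.atomic A, Or.inl (Or.inl (Set.mem_insert_of_mem _ ⟨A, rfl⟩)), hXA, hbA⟩

/-! ### Pigeonhole for antitone families over a finite type -/

lemma pigeon {α : Type*} [Finite α] {P : ℕ → α → Prop}
    (mono : ∀ {ℓ m : ℕ}, ℓ ≤ m → ∀ a, P m a → P ℓ a)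
    (h : ∀ ℓ, ∃ a, P ℓ a) : ∃ a, ∀ ℓ, P ℓ a := by
  by_contra hc
  push_neg at hc
  choose f hf using hc
  cases isEmpty_or_nonempty α with
  | inl hemp => obtain ⟨a, -⟩ := h 0; exact hemp.false a
  | inr hne =>
      have : Fintype α := Fintype.ofFinite α
      obtain ⟨a, ha⟩ := h (Finset.univ.sup f)
      exact hf a (mono (Finset.le_sup (Finset.mem_univ a)) a ha)

end HornAux


theorem hornALC_ef_game_set {Con Rol : Type} [Fintype Con] [Fintype Rol]
    {D1 D2 : Type} [Nonempty D1] [Nonempty D2]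
    (M : Str Con Rol D1) (N : Str Con Rol D2) (X : Set D1) (hX : X.Nonempty) (b : D2) :
    (∀ ℓ : ℕ, leHornDepth M N ℓ X b ↔
      ∃ X₀ : Set D1, X₀ ⊆ X ∧ X₀.Nonempty ∧ HornSimL M N ℓ X₀ b) ∧
    (Finite D1 → Finite D2 → (leHorn M N X b ↔
      ∃ X₀ : Set D1, X₀ ⊆ X ∧ X₀.Nonempty ∧ HornSim M N X₀ b)) := by
  have hpart1 : ∀ ℓ : ℕ, leHornDepth M N ℓ X b ↔
      ∃ X₀ : Set D1, X₀ ⊆ X ∧ X₀.Nonempty ∧ HornSimL M N ℓ X₀ b := by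
    intro ℓ
    constructor
    · intro h
      set L : ALC Con Rol := HornAux.tpc ℓ (HornAux.tp N ℓ b) with hLdef
      have hLb : b ∈ L.sem N := HornAux.tpc_self ℓ N b
      have hLsim : ∀ a, a ∈ L.sem M → SimL N M ℓ b a := fun a => HornAux.tpc_sim ℓ N M b a
      have hLelu : L.IsELU := HornAux.tpc_isELU ℓ _
      have hLd : L.depth ≤ ℓ := HornAux.tpc_depth ℓ _
      set X₀ : Set D1 := {a | a ∈ X ∧ SimL N M ℓ b a} with hX₀def
      have hne : X₀.Nonempty := by
        by_contra hcon
        rw [Set.not_nonempty_iff_eq_empty] at hcon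
        have hsub : X ⊆ (ALC.impl L ALC.bot).sem M := by
          intro a ha
          have haL : a ∉ L.sem M := fun hL' =>
            (Set.eq_empty_iff_forall_notMem.1 hcon a) ⟨ha, hLsim a hL'⟩
          exact Or.inl haL
        have hdepth : (ALC.impl L ALC.bot).depth ≤ ℓ := by
          simp only [ALC.depth, max_le_iff]
          exact ⟨hLd, Nat.zero_le _⟩
        have hb' := h _ (ALC.IsHorn.impl hLelu ALC.IsHorn.bot) hdepth hsub
        rcases hb' with h' | h'
        · exact h' hLb
        · exact h'
      have hsims : ∀ a ∈ X₀, SimL N M ℓ b a := fun a ha => ha.2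
      have hhs : HornSimL M N ℓ X₀ b := by
        by_contra hns
        obtain ⟨C, hC, hsub, hnb⟩ := HornAux.key M N ℓ X₀ b hne hsims hns
        obtain ⟨hH, hd⟩ := HornAux.CC_spec Con Rol ℓ C hC
        have hXsub : X ⊆ (ALC.impl L C).sem M := by
          intro a ha
          by_cases htp : a ∈ L.sem M
          · exact Or.inr (hsub ⟨ha, hLsim a htp⟩)
          · exact Or.inl htp
        have hdepth : (ALC.impl L C).depth ≤ ℓ := by
          simp only [ALC.depth, max_le_iff]
          exact ⟨hLd, hd⟩
        have hb' := h _ (ALC.IsHorn.impl hLelu hH) hdepth hXsub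
        rcases hb' with h' | h'
        · exact h' hLb
        · exact hnb h'
      exact ⟨X₀, fun a ha => ha.1, hne, hhs⟩
    · rintro ⟨X₀, hsub, hne, hhs⟩ C hC hd hXC
      exact HornAux.horn_hornSimL hC ℓ hd hhs fun a ha => hXC (hsub ha)
  refine ⟨hpart1, fun hD1 hD2 => ?_⟩
  haveI := hD1
  haveI := hD2
  haveI : Finite (Set D1) := inferInstanceAs (Finite (D1 → Prop))
  constructor
  · intro h
    have hld : ∀ ℓ, ∃ X₀ : Set D1, X₀ ⊆ X ∧ X₀.Nonempty ∧ HornSimL M N ℓ X₀ b := fun ℓ =>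
      (hpart1 ℓ).1 fun C hC _ hs => h C hC hs
    obtain ⟨X₀, hX₀⟩ := HornAux.pigeon
      (mono := fun h12 X₀ hp => ⟨hp.1, hp.2.1, HornAux.hornSimL_mono h12 hp.2.2⟩) hld
    refine ⟨X₀, (hX₀ 0).1, (hX₀ 0).2.1, ?_⟩
    refine ⟨{p : Set D1 × D2 | ∀ k, HornSimL M N k p.1 p.2}, ?_, fun k => (hX₀ k).2.2⟩
    intro X' b' hXb'
    refine ⟨HornAux.hornSimL_nonempty 0 (hXb' 0),
      fun A hA => HornAux.hornSimL_atom 0 (hXb' 0) hA, ?_, ?_, ?_⟩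
    · intro R Y hup
      have hex : ∀ k, ∃ p : Set D1 × D2,
          p.1 ⊆ Y ∧ (b', p.2) ∈ N.rolI R ∧ HornSimL M N k p.1 p.2 := by
        intro k
        obtain ⟨Y', hY', b'', hb'', hs⟩ := (hXb' (k + 1)).2.1 R Y hup
        exact ⟨(Y', b''), hY', hb'', hs⟩
      obtain ⟨p, hp⟩ := HornAux.pigeon
        (mono := fun h12 p hp => ⟨hp.1, hp.2.1, HornAux.hornSimL_mono h12 hp.2.2⟩) hex
      exact ⟨p.1, (hp 0).1, p.2, (hp 0).2.1, fun k => (hp k).2.2⟩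
    · intro R b'' hb''
      have hex : ∀ k, ∃ Y : Set D1, relDown (M.rolI R) X' Y ∧ HornSimL M N k Y b'' :=
        fun k => (hXb' (k + 1)).2.2.1 R b'' hb''
      obtain ⟨Y, hY⟩ := HornAux.pigeon
        (mono := fun h12 Y hY => ⟨hY.1, HornAux.hornSimL_mono h12 hY.2⟩) hex
      exact ⟨Y, (hY 0).1, fun k => (hY k).2⟩
    · intro a ha
      refine ⟨{q : D2 × D1 | ∀ k, SimL N M k q.1 q.2}, ?_,
        fun k => HornAux.hornSimL_simL k (hXb' k) a ha⟩
      intro c a₀ hca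
      refine ⟨fun A hA => hca 0 A hA, ?_⟩
      intro R c' hcc'
      have hex : ∀ k, ∃ a', (a₀, a') ∈ M.rolI R ∧ SimL N M k c' a' := by
        intro k
        obtain ⟨a', ha', hs⟩ := (hca (k + 1)).2 R c' hcc'
        exact ⟨a', ha', hs⟩
      obtain ⟨a', ha'⟩ := HornAux.pigeon
        (mono := fun h12 a' hp => ⟨hp.1, HornAux.simL_mono h12 hp.2⟩) hex
      exact ⟨a', (ha' 0).1, fun k => (ha' k).2⟩
  · rintro ⟨X₀, hsub, hne, Z, hZ, hmem⟩ C hC hXC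
    exact HornAux.horn_hornSim hC hZ hmem fun a ha => hXC (hsub ha)
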